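/- (Schoenberg) A symmetric hollow N×N real matrix D (zero diagonal) is a Euclidean distance matrix of some points in some Euclidean space if and only if -L D L is positive semi-definite, where L = I - (1/N)·11ᵀ. -/

import Mathlib

open scoped RealInnerProductSpace Matrix
open Finset
open scoped MatrixOrder

lemma euclid_norm_sq' {n : ℕ} (x : EuclideanSpace ℝ (Fin n)) : ‖x‖ ^ 2 = ∑ i, x i ^ 2 := by
  rw [EuclideanSpace.norm_eq, Real.sq_sqrt (by positivity)]
  simp [sq_abs]

/-- Schoenberg's theorem: a symmetric hollow matrix D is a Euclidean distance matrix
(of some points in some Euclidean space) iff -L D L is positive semidefinite,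
where L = I - (1/N)·11ᵀ. -/
theorem schoenberg (N : ℕ) (D : Matrix (Fin N) (Fin N) ℝ)
    (hsymm : ∀ i j, D i j = D j i) (hhollow : ∀ i, D i i = 0)
    (L : Matrix (Fin N) (Fin N) ℝ)
    (hL : L = 1 - (N : ℝ)⁻¹ • Matrix.of (fun _ _ : Fin N => (1 : ℝ))) :
    (∃ (η : ℕ) (x : Fin N → EuclideanSpace ℝ (Fin η)),
        ∀ i j, D i j = ‖x i - x j‖ ^ 2) ↔ (-(L * D * L)).PosSemidef := by
  have hDt : Dᵀ = D := by ext i j; simp [Matrix.transpose_apply, hsymm i j]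
  have hLt : Lᵀ = L := by
    subst hL
    ext i j
    simp [Matrix.transpose_apply, Matrix.one_apply, eq_comm]
  have hcol : ∀ j : Fin N, ∑ i, L i j = 0 := by
    intro j
    have hN : (N : ℝ) ≠ 0 := Nat.cast_ne_zero.mpr j.pos.ne'
    subst hL
    simp [Matrix.sub_apply, Matrix.one_apply, Finset.sum_sub_distrib, Finset.sum_ite_eq,
      Finset.card_univ]
    field_simp
    simp
  constructor
  · rintro ⟨η, x, hx⟩
    refine Matrix.PosSemidef.of_dotProduct_mulVec_nonneg ?_ ?_
    · rw [Matrix.IsHermitian, Matrix.conjTranspose_eq_transpose_of_trivial,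
        Matrix.transpose_neg, Matrix.transpose_mul, Matrix.transpose_mul, hDt, hLt,
        Matrix.mul_assoc]
    · intro v
      set w := L *ᵥ v with hwdef
      have hsum : ∑ i, w i = 0 := by
        rw [hwdef]
        simp only [Matrix.mulVec, dotProduct]
        rw [Finset.sum_comm]
        simp [← Finset.sum_mul, hcol]
      have hstar : star v = v := funext fun k => rfl
      have hquad : star v ⬝ᵥ ((-(L * D * L)) *ᵥ v) = -(w ⬝ᵥ (D *ᵥ w)) := by
        rw [hstar, Matrix.neg_mulVec, dotProduct_neg]
        congr 1
        rw [← Matrix.mulVec_mulVec, ← Matrix.mulVec_mulVec, Matrix.dotProduct_mulVec,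
          ← hLt, Matrix.vecMul_transpose, hLt]
      have hform : w ⬝ᵥ (D *ᵥ w) = ∑ i, ∑ j, w i * w j * D i j := by
        simp only [dotProduct, Matrix.mulVec, Finset.mul_sum]
        exact sum_congr rfl fun i _ => sum_congr rfl fun j _ => by ring
      have hip : (inner ℝ (∑ i, w i • x i) (∑ j, w j • x j) : ℝ)
          = ∑ i, ∑ j, w i * w j * ⟪x i, x j⟫ := by
        rw [sum_inner]
        refine sum_congr rfl fun i _ => ?_
        rw [inner_sum]
        refine sum_congr rfl fun j _ => ?_
        rw [real_inner_smul_left, real_inner_smul_right]; ring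
      have pA : ∑ i, ∑ j, w i * ‖x i‖ ^ 2 * w j = 0 := by
        simp [← Finset.mul_sum, hsum]
      have pB : ∑ i, ∑ j, w i * (w j * ‖x j‖ ^ 2) = 0 := by
        simp only [← Finset.mul_sum]
        rw [← Finset.sum_mul, hsum, zero_mul]
      have pC : ∑ i, ∑ j, 2 * (w i * w j * ⟪x i, x j⟫) = 2 * ‖∑ i, w i • x i‖ ^ 2 := by
        simp only [← Finset.mul_sum]
        rw [← real_inner_self_eq_norm_sq, hip]
      have key : ∑ i, ∑ j, w i * w j * D i j = -(2 * ‖∑ i, w i • x i‖ ^ 2) := by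
        calc ∑ i, ∑ j, w i * w j * D i j
            = ∑ i, ∑ j, (w i * ‖x i‖ ^ 2 * w j + w i * (w j * ‖x j‖ ^ 2)
                - 2 * (w i * w j * ⟪x i, x j⟫)) := by
              refine sum_congr rfl fun i _ => sum_congr rfl fun j _ => ?_
              rw [hx i j, norm_sub_sq_real]; ring
          _ = (∑ i, ∑ j, w i * ‖x i‖ ^ 2 * w j) + (∑ i, ∑ j, w i * (w j * ‖x j‖ ^ 2))
                - ∑ i, ∑ j, 2 * (w i * w j * ⟪x i, x j⟫) := by
              simp [Finset.sum_add_distrib, Finset.sum_sub_distrib]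
          _ = -(2 * ‖∑ i, w i • x i‖ ^ 2) := by rw [pA, pB, pC]; ring
      rw [hquad, hform, key, neg_neg]
      positivity
  · intro hA
    -- entrywise formula for L * D * L
    have hexp : L * D * L = D - (N : ℝ)⁻¹ • (Matrix.of (fun _ _ : Fin N => (1 : ℝ)) * D)
        - (N : ℝ)⁻¹ • (D * Matrix.of (fun _ _ : Fin N => (1 : ℝ)))
        + ((N : ℝ)⁻¹) ^ 2 • (Matrix.of (fun _ _ : Fin N => (1 : ℝ)) * D
            * Matrix.of (fun _ _ : Fin N => (1 : ℝ))) := by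
      rw [hL]
      simp only [Matrix.sub_mul, Matrix.mul_sub, Matrix.one_mul, Matrix.mul_one,
        Matrix.smul_mul, Matrix.mul_smul, smul_smul, pow_two]
      module
    have hE : ∀ i j, (L * D * L) i j = D i j - (N : ℝ)⁻¹ * (∑ k, D k j)
        - (N : ℝ)⁻¹ * (∑ k, D i k) + ((N : ℝ)⁻¹) ^ 2 * (∑ l, ∑ k, D k l) := by
      intro i j
      rw [hexp]
      simp [Matrix.sub_apply, Matrix.add_apply, Matrix.smul_apply, Matrix.mul_apply,
        Finset.sum_mul]
    set B := CFC.sqrt (-(L * D * L)) with hB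
    have hBsym : ∀ k l, B k l = B l k := by
      intro k l
      have h := (Matrix.nonneg_iff_posSemidef.mp (CFC.sqrt_nonneg (-(L * D * L)))).1
      calc B k l = Bᴴ k l := by rw [h]
        _ = B l k := by simp [Matrix.conjTranspose_apply]
    have hGram : ∀ a b, ∑ k, B k a * B k b = (-(L * D * L)) a b := by
      intro a b
      calc ∑ k, B k a * B k b = ∑ k, B a k * B k b := by
            refine sum_congr rfl fun k _ => ?_
            rw [hBsym k a]
        _ = (B * B) a b := (Matrix.mul_apply).symm
        _ = (-(L * D * L)) a b := by rw [CFC.sqrt_mul_sqrt_self _ hA.nonneg]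
    refine ⟨N, fun i => (WithLp.toLp 2 (fun k => (Real.sqrt 2)⁻¹ * B k i) : EuclideanSpace ℝ (Fin N)), ?_⟩
    intro i j
    rw [euclid_norm_sq']
    have h2 : ((Real.sqrt 2)⁻¹) ^ 2 = 2⁻¹ := by
      rw [inv_pow, Real.sq_sqrt (by norm_num : (0:ℝ) ≤ 2)]
    have main : ∑ k, (((WithLp.toLp 2 (fun k => (Real.sqrt 2)⁻¹ * B k i) : EuclideanSpace ℝ (Fin N))
          - (WithLp.toLp 2 (fun k => (Real.sqrt 2)⁻¹ * B k j) : EuclideanSpace ℝ (Fin N))) k) ^ 2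
        = 2⁻¹ * ((-(L * D * L)) i i + (-(L * D * L)) j j - 2 * (-(L * D * L)) i j) := by
      calc ∑ k, (((WithLp.toLp 2 (fun k => (Real.sqrt 2)⁻¹ * B k i) : EuclideanSpace ℝ (Fin N))
              - (WithLp.toLp 2 (fun k => (Real.sqrt 2)⁻¹ * B k j) : EuclideanSpace ℝ (Fin N))) k) ^ 2
          = ∑ k, (2⁻¹ * (B k i * B k i) + 2⁻¹ * (B k j * B k j)
              - 2⁻¹ * 2 * (B k i * B k j)) := by
            refine sum_congr rfl fun k _ => ?_
            have hk : (((WithLp.toLp 2 (fun k => (Real.sqrt 2)⁻¹ * B k i) : EuclideanSpace ℝ (Fin N))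
                - (WithLp.toLp 2 (fun k => (Real.sqrt 2)⁻¹ * B k j) : EuclideanSpace ℝ (Fin N))) k)
                = (Real.sqrt 2)⁻¹ * (B k i - B k j) := by
              simp [PiLp.sub_apply, mul_sub]
            rw [hk, mul_pow, h2]; ring
        _ = 2⁻¹ * (∑ k, B k i * B k i) + 2⁻¹ * (∑ k, B k j * B k j)
              - 2⁻¹ * 2 * (∑ k, B k i * B k j) := by
            simp [Finset.sum_add_distrib, Finset.sum_sub_distrib, ← Finset.mul_sum]
        _ = _ := by rw [hGram i i, hGram j j, hGram i j]; ring
    rw [main, Matrix.neg_apply, Matrix.neg_apply, Matrix.neg_apply, hE i i, hE j j, hE i j,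
      hhollow i, hhollow j]
    have hci : ∑ k, D k i = ∑ k, D i k := sum_congr rfl fun k _ => hsymm k i
    have hcj : ∑ k, D k j = ∑ k, D j k := sum_congr rfl fun k _ => hsymm k j
    rw [hci, hcj]
    ring
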